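/- For every u ∈ (0,∞)^n, the matrix product H⁰(u) A⁰(u) equals the constant matrix with (i,j)-entry δ_{ij} μ_i/π_i − (1 − δ_{ij}) a_{ji}/π_i, and this matrix is positive semi-definite, i.e. zᵀ H⁰(u) A⁰(u) z ≥ 0 for all z ∈ ℝ^n. -/

import Mathlib

open Finset Real

noncomputable section

/-- The diffusion matrix `A(u)`: `A_{ij}(u) = δ_{ij}(a_{i0} + Σ_k a_{ik} u_k^s) + s a_{ij} u_i u_j^{s-1}`. -/
def matA (n : ℕ) (s : ℝ) (a0 : Fin n → ℝ) (a : Fin n → Fin n → ℝ) (u : Fin n → ℝ) :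
    Matrix (Fin n) (Fin n) ℝ :=
  Matrix.of fun i j =>
    (if i = j then a0 i + ∑ k, a i k * u k ^ s else 0) + s * a i j * u i * u j ^ (s - 1)

/-- The entropy Hessian `H(u)`: `H_{ij}(u) = δ_{ij} s π_i u_i^{s-2}`. -/
def matH (n : ℕ) (s : ℝ) (P : Fin n → ℝ) (u : Fin n → ℝ) : Matrix (Fin n) (Fin n) ℝ :=
  Matrix.of fun i j => if i = j then s * P i * u i ^ (s - 2) else 0

/-- The quadratic form `zᵀ M z`. -/
def quad (n : ℕ) (M : Matrix (Fin n) (Fin n) ℝ) (z : Fin n → ℝ) : ℝ :=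
  ∑ i, ∑ j, z i * M i j * z j

/-- `μ_i := (π_i/2) Σ_{j≠i} (a_{ji}/π_i + a_{ij}/π_j)`. -/
def muCoef (n : ℕ) (a : Fin n → Fin n → ℝ) (P : Fin n → ℝ) (i : Fin n) : ℝ :=
  P i / 2 * ∑ j ∈ Finset.univ.erase i, (a j i / P i + a i j / P j)

/-- `H⁰_{ij}(u) = δ_{ij} u_i⁻¹`. -/
def matH0 (n : ℕ) (u : Fin n → ℝ) : Matrix (Fin n) (Fin n) ℝ :=
  Matrix.of fun i j => if i = j then (u i)⁻¹ else 0

/-- `A⁰_{ij}(u) = δ_{ij} (u_i/π_i) μ_i − (1−δ_{ij}) (u_i/π_i) a_{ji}`. -/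
def matA0 (n : ℕ) (a : Fin n → Fin n → ℝ) (P : Fin n → ℝ) (u : Fin n → ℝ) :
    Matrix (Fin n) (Fin n) ℝ :=
  Matrix.of fun i j =>
    if i = j then u i / P i * muCoef n a P i else -(u i / P i * a j i)

/-- `A¹_{ij}(u) = δ_{ij} u_i`. -/
def matA1 (n : ℕ) (u : Fin n → ℝ) : Matrix (Fin n) (Fin n) ℝ :=
  Matrix.of fun i j => if i = j then u i else 0

theorem stmt11 (n : ℕ) (hn : 1 ≤ n)
    (a : Fin n → Fin n → ℝ) (P : Fin n → ℝ)
    (ha : ∀ i j, 0 ≤ a i j) (hP : ∀ i, 0 < P i) :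
    ∀ u : Fin n → ℝ, (∀ i, 0 < u i) →
      (matH0 n u * matA0 n a P u
          = Matrix.of fun i j =>
              if i = j then muCoef n a P i / P i else -(a j i / P i))
        ∧ ∀ z : Fin n → ℝ, 0 ≤ quad n (matH0 n u * matA0 n a P u) z := by
  intro u hu
  have hu0 : ∀ i, u i ≠ 0 := fun i => (hu i).ne'
  have hP0 : ∀ i, P i ≠ 0 := fun i => (hP i).ne'
  have hprod : matH0 n u * matA0 n a P u
      = Matrix.of fun i j =>
          if i = j then muCoef n a P i / P i else -(a j i / P i) := by
    ext i j
    simp only [Matrix.mul_apply, matH0, matA0, Matrix.of_apply]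
    rw [Finset.sum_eq_single i]
    · rw [if_pos rfl]
      by_cases h : i = j
      · subst h
        rw [if_pos rfl, if_pos rfl,
          show (u i)⁻¹ * (u i / P i * muCoef n a P i)
            = ((u i)⁻¹ * u i) * (muCoef n a P i / P i) by ring,
          inv_mul_cancel₀ (hu0 i), one_mul]
      · rw [if_neg h, if_neg h,
          show (u i)⁻¹ * -(u i / P i * a j i)
            = -(((u i)⁻¹ * u i) * (a j i / P i)) by ring,
          inv_mul_cancel₀ (hu0 i), one_mul]
    · intro k _ hk
      simp [Ne.symm hk]
    · simp
  refine ⟨hprod, fun z => ?_⟩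
  rw [hprod]
  have hd : ∀ i, muCoef n a P i / P i + a i i / P i
      = (∑ j, a j i / P i) / 2 + (∑ j, a i j / P j) / 2 := by
    intro i
    rw [muCoef, Finset.sum_erase_eq_sub (Finset.mem_univ i), Finset.sum_add_distrib]
    set A := ∑ j, a j i / P i with hA
    set B := ∑ j, a i j / P j with hB
    set c := a i i / P i with hc
    rw [show P i / 2 * (A + B - (c + c)) / P i
        = (A + B - (c + c)) / 2 * (P i / P i) by ring,
      div_self (hP0 i), mul_one]
    ring
  have key : quad n (Matrix.of fun i j =>
        if i = j then muCoef n a P i / P i else -(a j i / P i)) z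
      = ∑ i, ∑ j, a j i / P i * (z i - z j) ^ 2 / 2 := by
    rw [quad]
    have step1 : ∀ i j : Fin n,
        z i * (Matrix.of fun i j =>
          if i = j then muCoef n a P i / P i else -(a j i / P i)) i j * z j
        = (if i = j then (muCoef n a P i / P i + a i i / P i) * (z i * z j) else 0)
            - a j i / P i * (z i * z j) := by
      intro i j
      simp only [Matrix.of_apply]
      by_cases h : i = j
      · subst h; rw [if_pos rfl, if_pos rfl]; ring
      · rw [if_neg h, if_neg h]; ring
    rw [Finset.sum_congr rfl (fun i _ =>
      Finset.sum_congr rfl (fun j _ => step1 i j))]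
    rw [Finset.sum_congr rfl (fun i _ => Finset.sum_sub_distrib _ _), Finset.sum_sub_distrib]
    have hdiag : ∀ i : Fin n,
        (∑ j, (if i = j then (muCoef n a P i / P i + a i i / P i) * (z i * z j) else 0))
        = (muCoef n a P i / P i + a i i / P i) * (z i * z i) := by
      intro i
      rw [Finset.sum_ite_eq, if_pos (Finset.mem_univ i)]
    rw [Finset.sum_congr rfl (fun i _ => hdiag i)]
    have expand : ∀ i j : Fin n, a j i / P i * (z i - z j) ^ 2 / 2
        = a j i / P i * z i ^ 2 / 2 + a j i / P i * z j ^ 2 / 2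
            - a j i / P i * (z i * z j) := by
      intro i j; ring
    rw [Finset.sum_congr rfl (fun i _ =>
      Finset.sum_congr rfl (fun j _ => expand i j))]
    rw [Finset.sum_congr rfl (fun i _ =>
        (Finset.sum_sub_distrib (s := Finset.univ) _ _)), Finset.sum_sub_distrib]
    congr 1
    rw [Finset.sum_congr rfl (fun i _ =>
        (Finset.sum_add_distrib (s := Finset.univ))), Finset.sum_add_distrib]
    have swap : (∑ i, ∑ j, a j i / P i * z j ^ 2 / 2)
        = ∑ i, ∑ j, a i j / P j * z i ^ 2 / 2 := by
      rw [Finset.sum_comm]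
    rw [swap, ← Finset.sum_add_distrib]
    refine Finset.sum_congr rfl fun i _ => ?_
    have e1 : (∑ j, a j i / P i * z i ^ 2 / 2) = (∑ j, a j i / P i) * z i ^ 2 / 2 := by
      conv_rhs => rw [Finset.sum_mul, Finset.sum_div]
    have e2 : (∑ j, a i j / P j * z i ^ 2 / 2) = (∑ j, a i j / P j) * z i ^ 2 / 2 := by
      conv_rhs => rw [Finset.sum_mul, Finset.sum_div]
    rw [e1, e2, hd i]
    ring
  rw [key]
  refine Finset.sum_nonneg fun i _ => Finset.sum_nonneg fun j _ => ?_
  have h1 : 0 ≤ a j i / P i := div_nonneg (ha j i) (hP i).le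
  positivity
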